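/- Let μ be a probability measure on the unit circle with orthonormal polynomials φ_n and suppose lim_{n→∞} ∫ z·|φ_n(z)|² dμ = τ for some τ with |τ| = 1. Then for every k ∈ ℤ, lim_{n→∞} ∫ z·φ_n(z)·conj(φ_{n+k}(z)) dμ = τ·δ_{0,k}. -/

import Mathlib

open MeasureTheory Filter

private lemma amgm17 (a b t : ℝ) (ht : 0 < t) :
    a * b ≤ (a ^ 2 + t ^ 2 * b ^ 2) / (2 * t) := by
  rw [le_div_iff₀ (by positivity)]
  nlinarith [sq_nonneg (a - t * b)]

private lemma sphere_norm_sq17 (z τ : ℂ) (hz : ‖z‖ = 1) (hτ : ‖τ‖ = 1) :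
    ‖z - τ‖ ^ 2 = 2 - 2 * ((starRingEnd ℂ τ) * z).re := by
  have h1 : Complex.normSq z = 1 := by
    rw [← Complex.sq_norm]; rw [hz]; norm_num
  have h2 : Complex.normSq τ = 1 := by
    rw [← Complex.sq_norm]; rw [hτ]; norm_num
  have h3 : ‖z - τ‖^2 = Complex.normSq (z - τ) := by
    rw [← Complex.sq_norm]
  rw [h3]
  simp only [Complex.normSq_apply, Complex.mul_re, Complex.sub_re, Complex.sub_im,
    Complex.conj_re, Complex.conj_im] at *
  nlinarith [h1, h2]

private lemma integral_re17 (μ : Measure ℂ) (f : ℂ → ℂ) (hf : Integrable f μ) :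
    ∫ z, (f z).re ∂μ = (∫ z, f z ∂μ).re := by
  simpa using integral_re hf

private lemma integral_ofReal17 (μ : Measure ℂ) (f : ℂ → ℝ) :
    ∫ z, ((f z : ℝ) : ℂ) ∂μ = ((∫ z, f z ∂μ : ℝ) : ℂ) := by
  simpa using (integral_ofReal (f := f) (μ := μ) (𝕜 := ℂ))

theorem stmt17 (μ : Measure ℂ) [IsProbabilityMeasure μ]
    (hcirc : μ (Metric.sphere (0 : ℂ) 1)ᶜ = 0)
    (φ : ℕ → ℂ → ℂ)
    (horth : ∀ m n : ℕ,
      ∫ z, φ n z * (starRingEnd ℂ) (φ m z) ∂μ = if m = n then 1 else 0)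
    (τ : ℂ) (hτ : ‖τ‖ = 1)
    (hiv : Tendsto (fun n : ℕ => ∫ z, z * (‖φ n z‖ ^ 2 : ℝ) ∂μ) atTop (nhds τ)) :
    ∀ k : ℤ,
      Tendsto (fun n : ℕ => ∫ z, z * φ n z * (starRingEnd ℂ) (φ (((n : ℤ) + k).toNat) z) ∂μ)
        atTop (nhds (τ * if k = 0 then 1 else 0)) := by
  have hae : ∀ᵐ z ∂μ, ‖z‖ = 1 := by
    have h2 : ∀ᵐ z ∂μ, z ∈ Metric.sphere (0:ℂ) 1 := ae_iff.2 hcirc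
    filter_upwards [h2] with z hz; simpa using hz
  have hint : ∀ n, Integrable (fun z => φ n z * (starRingEnd ℂ) (φ n z)) μ := by
    intro n
    by_contra h
    have h0 := integral_undef h
    rw [horth n n] at h0
    simp at h0
  have hconj : ∀ (w : ℂ), w * (starRingEnd ℂ) w = ((‖w‖ ^ 2 : ℝ) : ℂ) := by
    intro w
    rw [Complex.mul_conj]
    simp [Complex.normSq_eq_norm_sq]
  have hφ2 : ∀ n, Integrable (fun z => (‖φ n z‖ ^ 2 : ℝ)) μ := by
    intro n
    refine ((hint n).re).congr (Eventually.of_forall fun z => ?_)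
    show (φ n z * (starRingEnd ℂ) (φ n z)).re = ‖φ n z‖ ^ 2
    rw [hconj, Complex.ofReal_re]
  have hnorm : ∀ n, ∫ z, (‖φ n z‖ ^ 2 : ℝ) ∂μ = 1 := by
    intro n
    have h := horth n n
    rw [if_pos rfl] at h
    rw [integral_congr_ae (Eventually.of_forall fun z => hconj (φ n z)),
      integral_ofReal17] at h
    exact_mod_cast h
  have hzint : ∀ n, Integrable (fun z => z * ((‖φ n z‖ ^ 2 : ℝ) : ℂ)) μ := by
    intro n
    exact Integrable.bdd_mul (c := 1) ((hφ2 n).ofReal)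
      aestronglyMeasurable_id (by filter_upwards [hae] with z hz; simp [hz])
  set ε : ℕ → ℝ := fun n => ∫ z, ‖z - τ‖ ^ 2 * ‖φ n z‖ ^ 2 ∂μ with hεdef
  have hεint : ∀ n, Integrable (fun z => ‖z - τ‖ ^ 2 * ‖φ n z‖ ^ 2) μ := by
    intro n
    refine Integrable.bdd_mul (c := 4) (hφ2 n)
      ((continuous_id.sub continuous_const).norm.pow 2).aestronglyMeasurable ?_
    filter_upwards [hae] with z hz
    have hb : ‖z - τ‖ ≤ 2 := by
      calc ‖z - τ‖ ≤ ‖z‖ + ‖τ‖ := norm_sub_le _ _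
      _ = 2 := by rw [hz, hτ]; norm_num
    rw [Real.norm_eq_abs, abs_of_nonneg (by positivity)]
    nlinarith [norm_nonneg (z - τ)]
  have hεeq : ∀ n, ε n
      = 2 - 2 * ((starRingEnd ℂ τ) * ∫ z, z * ((‖φ n z‖ ^ 2 : ℝ) : ℂ) ∂μ).re := by
    intro n
    have step1 : ε n = ∫ z,
        (2 * ‖φ n z‖ ^ 2 - 2 * ((starRingEnd ℂ τ) * (z * ((‖φ n z‖ ^ 2 : ℝ) : ℂ))).re) ∂μ := by
      refine integral_congr_ae ?_
      filter_upwards [hae] with z hz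
      have h5 := sphere_norm_sq17 z τ hz hτ
      have hre : ((starRingEnd ℂ τ) * (z * ((‖φ n z‖ ^ 2 : ℝ) : ℂ))).re
          = ((starRingEnd ℂ τ) * z).re * ‖φ n z‖ ^ 2 := by
        rw [← mul_assoc, Complex.mul_re, Complex.ofReal_re, Complex.ofReal_im]
        ring
      rw [hre, h5]
      ring
    have hint2 : Integrable (fun z => (starRingEnd ℂ τ) * (z * ((‖φ n z‖ ^ 2 : ℝ) : ℂ))) μ :=
      (hzint n).const_mul _
    have hint3 : Integrable (fun z => (2:ℝ) * ((starRingEnd ℂ τ) * (z * ((‖φ n z‖ ^ 2 : ℝ) : ℂ))).re) μ :=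
      hint2.re.const_mul 2
    rw [step1, integral_sub ((hφ2 n).const_mul 2) hint3, integral_const_mul, integral_const_mul,
      hnorm n, integral_re17 μ _ hint2, integral_const_mul]
    ring
  have hε0 : Tendsto ε atTop (nhds 0) := by
    have h2 : Tendsto (fun n => (starRingEnd ℂ τ) * ∫ z, z * ((‖φ n z‖ ^ 2 : ℝ) : ℂ) ∂μ)
        atTop (nhds ((starRingEnd ℂ τ) * τ)) := hiv.const_mul _
    have h3 := (Complex.continuous_re.tendsto _).comp h2
    have h4 : ((starRingEnd ℂ τ) * τ).re = 1 := by
      rw [mul_comm, Complex.mul_conj, Complex.ofReal_re, ← Complex.sq_norm,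
        hτ]
      norm_num
    rw [h4] at h3
    have h5 : Tendsto (fun n => 2 - 2 * ((starRingEnd ℂ τ)
        * ∫ z, z * ((‖φ n z‖ ^ 2 : ℝ) : ℂ) ∂μ).re) atTop (nhds (2 - 2 * 1)) :=
      tendsto_const_nhds.sub (h3.const_mul 2)
    rw [show (2 - 2 * 1 : ℝ) = 0 by norm_num] at h5
    exact h5.congr fun n => (hεeq n).symm
  intro k
  rcases eq_or_ne k 0 with hk | hk
  · subst hk
    have heq : (fun n : ℕ => ∫ z, z * φ n z * (starRingEnd ℂ) (φ (((n : ℤ) + 0).toNat) z) ∂μ)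
        = fun n : ℕ => ∫ z, z * ((‖φ n z‖ ^ 2 : ℝ) : ℂ) ∂μ := by
      funext n
      refine integral_congr_ae (Eventually.of_forall fun z => ?_)
      show z * φ n z * (starRingEnd ℂ) (φ (((n : ℤ) + 0).toNat) z) = _
      rw [show (((n : ℤ) + 0).toNat) = n by omega, mul_assoc, hconj]
    rw [heq]
    simpa using hiv
  · simp only [if_neg hk, mul_zero]
    rw [Metric.tendsto_atTop]
    intro δ hδ
    obtain ⟨N1, hN1⟩ := (Metric.tendsto_atTop.1 hε0) (δ ^ 2) (by positivity)
    refine ⟨max N1 k.natAbs, fun n hn => ?_⟩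
    set m := ((n : ℤ) + k).toNat with hm
    have hmn : m ≠ n := by
      have h1 : k.natAbs ≤ n := le_trans (le_max_right _ _) hn
      simp only [hm]
      omega
    have hεn : ε n < δ ^ 2 := by
      have h6 := hN1 n (le_trans (le_max_left _ _) hn)
      rw [Real.dist_eq, sub_zero] at h6
      exact lt_of_le_of_lt (le_abs_self _) h6
    rw [dist_eq_norm, sub_zero]
    by_cases hI : Integrable (fun z => z * φ n z * (starRingEnd ℂ) (φ m z)) μ
    · have hf2 : Integrable (fun z => φ n z * (starRingEnd ℂ) (φ m z)) μ := by
        have hg : Integrable (fun z => (starRingEnd ℂ) z * (z * φ n z * (starRingEnd ℂ) (φ m z))) μ :=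
          Integrable.bdd_mul (c := 1) hI (Complex.continuous_conj.aestronglyMeasurable)
            (by filter_upwards [hae] with z hz; simp [hz])
        refine hg.congr ?_
        filter_upwards [hae] with z hz
        rw [show (starRingEnd ℂ) z * (z * φ n z * (starRingEnd ℂ) (φ m z))
            = (z * (starRingEnd ℂ) z) * (φ n z * (starRingEnd ℂ) (φ m z)) by ring]
        rw [hconj z, hz]
        norm_num
      have hzf : Integrable (fun z => z * (φ n z * (starRingEnd ℂ) (φ m z))) μ :=
        hI.congr (Eventually.of_forall fun z => by ring)
      have hsub : Integrable (fun z => (z - τ) * (φ n z * (starRingEnd ℂ) (φ m z))) μ := by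
        refine (hzf.sub (hf2.const_mul τ)).congr (Eventually.of_forall fun z => ?_)
        simp only [Pi.sub_apply]
        ring
      have horth0 : ∫ z, φ n z * (starRingEnd ℂ) (φ m z) ∂μ = 0 := by
        rw [horth m n, if_neg hmn]
      have key : ∫ z, z * φ n z * (starRingEnd ℂ) (φ m z) ∂μ
          = ∫ z, (z - τ) * (φ n z * (starRingEnd ℂ) (φ m z)) ∂μ := by
        have h7 : ∫ z, (z - τ) * (φ n z * (starRingEnd ℂ) (φ m z)) ∂μ
            = (∫ z, z * (φ n z * (starRingEnd ℂ) (φ m z)) ∂μ)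
              - ∫ z, τ * (φ n z * (starRingEnd ℂ) (φ m z)) ∂μ := by
          rw [← integral_sub hzf (hf2.const_mul τ)]
          exact integral_congr_ae (Eventually.of_forall fun z => by ring)
        rw [h7, integral_const_mul, horth0, mul_zero, sub_zero]
        exact integral_congr_ae (Eventually.of_forall fun z => by ring)
      rw [key]
      have hb1 : ‖∫ z, (z - τ) * (φ n z * (starRingEnd ℂ) (φ m z)) ∂μ‖
          ≤ ∫ z, ‖(z - τ) * (φ n z * (starRingEnd ℂ) (φ m z))‖ ∂μ :=
        norm_integral_le_integral_norm _
      have hA : Integrable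
          (fun z => (‖z - τ‖ ^ 2 * ‖φ n z‖ ^ 2 + δ ^ 2 * ‖φ m z‖ ^ 2) / (2 * δ)) μ :=
        ((hεint n).add ((hφ2 m).const_mul (δ ^ 2))).div_const _
      have hb2 : ∫ z, ‖(z - τ) * (φ n z * (starRingEnd ℂ) (φ m z))‖ ∂μ
          ≤ ∫ z, (‖z - τ‖ ^ 2 * ‖φ n z‖ ^ 2 + δ ^ 2 * ‖φ m z‖ ^ 2) / (2 * δ) ∂μ := by
        refine integral_mono hsub.norm hA fun z => ?_
        have h8 : ‖(z - τ) * (φ n z * (starRingEnd ℂ) (φ m z))‖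
            = (‖z - τ‖ * ‖φ n z‖) * ‖φ m z‖ := by
          simp [norm_mul, mul_assoc]
        rw [h8]
        calc (‖z - τ‖ * ‖φ n z‖) * ‖φ m z‖
            ≤ ((‖z - τ‖ * ‖φ n z‖) ^ 2 + δ ^ 2 * ‖φ m z‖ ^ 2) / (2 * δ) :=
              amgm17 _ _ _ hδ
        _ = (‖z - τ‖ ^ 2 * ‖φ n z‖ ^ 2 + δ ^ 2 * ‖φ m z‖ ^ 2) / (2 * δ) := by ring
      have hb3 : ∫ z, (‖z - τ‖ ^ 2 * ‖φ n z‖ ^ 2 + δ ^ 2 * ‖φ m z‖ ^ 2) / (2 * δ) ∂μ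
          = (ε n + δ ^ 2) / (2 * δ) := by
        rw [integral_div, integral_add (hεint n) ((hφ2 m).const_mul (δ ^ 2)),
          integral_const_mul, hnorm m, mul_one]
      have hlt : (ε n + δ ^ 2) / (2 * δ) < δ := by
        rw [div_lt_iff₀ (by positivity)]
        nlinarith [hεn]
      calc ‖∫ z, (z - τ) * (φ n z * (starRingEnd ℂ) (φ m z)) ∂μ‖
          ≤ (ε n + δ ^ 2) / (2 * δ) := by rw [← hb3]; exact le_trans hb1 hb2
      _ < δ := hlt
    · rw [integral_undef hI]
      simpa using hδ
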